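/- For every preorder τ on a finite set E, every point of the finite set V_τ consisting of the vectors −e_e (e ∈ E) and Σ_{e∈I} e_e for nonempty order ideals I of τ is a vertex of the convex hull R_τ^∨ = conv(V_τ), and R_τ^∨ contains no lattice points other than the origin and the points of V_τ. -/

import Mathlib

def IsOrderIdeal {E : Type*} (r : E → E → Prop) (I : Finset E) : Prop :=
  ∀ a b : E, r a b → b ∈ I → a ∈ I

/-- The set `V_τ` of the vectors `−e_e` (`e ∈ E`) and the indicator vectors
of the nonempty order ideals of `τ`. -/
def Vtau (E : Type*) [Fintype E] [DecidableEq E] (r : E → E → Prop) : Set (E → ℝ) :=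
  {v | ∃ e : E, v = -Pi.single e 1} ∪
    {v | ∃ I : Finset E, I.Nonempty ∧ IsOrderIdeal r I ∧
      v = fun e => if e ∈ I then (1 : ℝ) else 0}

section Aux

variable {E : Type*} [Fintype E] [DecidableEq E]

noncomputable def lfun (w : E → ℝ) : (E → ℝ) →ₗ[ℝ] ℝ where
  toFun x := ∑ e, w e * x e
  map_add' x y := by simp [mul_add, Finset.sum_add_distrib]
  map_smul' c x := by simp [Finset.mul_sum, mul_left_comm]

set_option linter.unusedSectionVars false in
lemma lfun_apply (w x : E → ℝ) : lfun w x = ∑ e, w e * x e := rfl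

lemma lfun_neg_single (w : E → ℝ) (a : E) : lfun w (-Pi.single a 1) = -w a := by
  simp [lfun_apply, Pi.single_apply, mul_ite]

lemma lfun_indicator (w : E → ℝ) (I : Finset E) :
    lfun w (fun e => if e ∈ I then (1 : ℝ) else 0) = ∑ f ∈ I, w f := by
  simp [lfun_apply, mul_ite, Finset.sum_ite_mem, Finset.univ_inter]

lemma lfun_cw (e : E) (y : E → ℝ) :
    lfun (fun f => if f = e then (1 : ℝ) else 0) y = y e := by
  simp [lfun_apply, ite_mul, Finset.sum_ite_eq']

lemma hull_le {F : Type*} [AddCommGroup F] [Module ℝ F] {S : Set F} (ℓ : F →ₗ[ℝ] ℝ) {c : ℝ}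
    (h : ∀ v ∈ S, ℓ v ≤ c) : ∀ y ∈ convexHull ℝ S, ℓ y ≤ c := by
  intro y hy
  have hconv : Convex ℝ {z | ℓ z ≤ c} := convex_halfSpace_le ℓ.isLinear c
  exact convexHull_min h hconv hy

lemma hull_eq_point {F : Type*} [AddCommGroup F] [Module ℝ F] {S : Set F} (ℓ : F →ₗ[ℝ] ℝ)
    {c : ℝ} {x₀ : F} (h : ∀ v ∈ S, ℓ v ≤ c) (heq : ∀ v ∈ S, ℓ v = c → v = x₀) :
    ∀ y ∈ convexHull ℝ S, ℓ y = c → y = x₀ := by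
  intro y hy hyc
  rw [_root_.convexHull_eq] at hy
  obtain ⟨ι, t, w, z, hw0, hw1, hz, hyy⟩ := hy
  rw [Finset.centerMass_eq_of_sum_1 _ _ hw1] at hyy
  have hterm : ∀ i ∈ t, w i * (c - ℓ (z i)) = 0 := by
    rw [← Finset.sum_eq_zero_iff_of_nonneg]
    · have : ℓ y = ∑ i ∈ t, w i * ℓ (z i) := by
        rw [← hyy]; simp [map_sum]
      have h2 : ∑ i ∈ t, w i * c = c := by rw [← Finset.sum_mul, hw1, one_mul]
      calc ∑ i ∈ t, w i * (c - ℓ (z i)) = ∑ i ∈ t, (w i * c - w i * ℓ (z i)) := by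
            simp [mul_sub]
        _ = c - ℓ y := by rw [Finset.sum_sub_distrib, h2, this]
        _ = 0 := by rw [hyc]; ring
    · intro i hi
      exact mul_nonneg (hw0 i hi) (sub_nonneg.2 (h _ (hz i hi)))
  have hzi : ∀ i ∈ t, w i • z i = w i • x₀ := by
    intro i hi
    rcases mul_eq_zero.1 (hterm i hi) with h0 | h0
    · rw [h0, zero_smul, zero_smul]
    · have : ℓ (z i) = c := by linarith [sub_eq_zero.1 h0]
      rw [heq _ (hz i hi) this]
  rw [← hyy, Finset.sum_congr rfl hzi, ← Finset.sum_smul, hw1, one_smul]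

lemma exposed_extreme {F : Type*} [AddCommGroup F] [Module ℝ F] {S : Set F} (ℓ : F →ₗ[ℝ] ℝ)
    {c : ℝ} {x₀ : F} (hx₀ : x₀ ∈ S) (hc : ℓ x₀ = c)
    (h : ∀ v ∈ S, ℓ v ≤ c) (heq : ∀ v ∈ S, ℓ v = c → v = x₀) :
    x₀ ∈ Set.extremePoints ℝ (convexHull ℝ S) := by
  refine ⟨subset_convexHull ℝ S hx₀, ?_⟩
  intro x₁ hx₁ x₂ hx₂ hseg
  obtain ⟨a, b, ha, hb, hab, hx⟩ := hseg
  have h1 : ℓ x₁ ≤ c := hull_le ℓ h x₁ hx₁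
  have h2 : ℓ x₂ ≤ c := hull_le ℓ h x₂ hx₂
  have hsum : a * ℓ x₁ + b * ℓ x₂ = c := by
    rw [← hc, ← hx]; simp
  have habc : a * c + b * c = c := by rw [← add_mul, hab, one_mul]
  have e1 : ℓ x₁ = c := by
    by_contra hne
    have hlt : a * ℓ x₁ < a * c := mul_lt_mul_of_pos_left (lt_of_le_of_ne h1 hne) ha
    have := mul_le_mul_of_nonneg_left h2 hb.le
    linarith
  have e2 : ℓ x₂ = c := by
    by_contra hne
    have hlt : b * ℓ x₂ < b * c := mul_lt_mul_of_pos_left (lt_of_le_of_ne h2 hne) hb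
    have := mul_le_mul_of_nonneg_left h1 ha.le
    linarith
  exact hull_eq_point ℓ h heq x₁ hx₁ e1

end Aux

/-- every point of `V_τ` is a vertex (extreme point) of the
convex hull `R_τ^∨ = conv(V_τ)`, and `R_τ^∨` contains no lattice points other
than the origin and the points of `V_τ`. -/
theorem Vtau_vertices_and_lattice_points (E : Type*) [Fintype E] [DecidableEq E]
    [Nonempty E]
    (r : E → E → Prop) (hrefl : ∀ a, r a a) (htrans : ∀ a b c, r a b → r b c → r a c) :
    (∀ v ∈ Vtau E r, v ∈ Set.extremePoints ℝ (convexHull ℝ (Vtau E r))) ∧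
    (∀ x : E → ℤ, (fun e => (x e : ℝ)) ∈ convexHull ℝ (Vtau E r) →
      x = 0 ∨ (fun e => (x e : ℝ)) ∈ Vtau E r) := by
  constructor
  · rintro v (⟨a, rfl⟩ | ⟨I, hIne, hIid, rfl⟩)
    · -- v = -e_a
      set w : E → ℝ := fun f => -(if f = a then 1 else 0) - 2 with hw
      have hsumJ : ∀ J : Finset E, ∑ f ∈ J, w f
          = -(if a ∈ J then (1 : ℝ) else 0) - 2 * J.card := by
        intro J
        simp only [hw, Finset.sum_sub_distrib, Finset.sum_neg_distrib,
          Finset.sum_ite_eq' J a (fun _ => (1 : ℝ)), Finset.sum_const, nsmul_eq_mul]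
        ring
      refine exposed_extreme (lfun w) (Set.mem_union_left _ ⟨a, rfl⟩) (c := 3) ?_ ?_ ?_
      · rw [lfun_neg_single]; simp [hw]; norm_num
      · rintro v (⟨g, rfl⟩ | ⟨J, hJne, _, rfl⟩)
        · rw [lfun_neg_single]; simp only [hw]
          split <;> norm_num
        · rw [lfun_indicator, hsumJ]
          have h1 : (1 : ℝ) ≤ J.card := by exact_mod_cast Finset.card_pos.2 hJne
          split <;> linarith
      · rintro v (⟨g, rfl⟩ | ⟨J, hJne, _, rfl⟩) hv
        · rw [lfun_neg_single] at hv; simp only [hw] at hv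
          by_cases hg : g = a
          · rw [hg]
          · simp [hg] at hv
        · rw [lfun_indicator, hsumJ] at hv
          have h1 : (1 : ℝ) ≤ J.card := by exact_mod_cast Finset.card_pos.2 hJne
          exfalso; revert hv; split <;> intro hv <;> linarith
    · -- v = 1_I
      set w : E → ℝ := fun f => if f ∈ I then 1 else -(1/2) with hw
      have hIcard : (1 : ℝ) ≤ I.card := by exact_mod_cast Finset.card_pos.2 hIne
      have hsumJ : ∀ J : Finset E, ∑ f ∈ J, w f
          = ((J ∩ I).card : ℝ) - ((J \ I).card : ℝ) / 2 := by
        intro J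
        rw [hw, Finset.sum_ite, Finset.sum_const, Finset.sum_const,
          Finset.filter_mem_eq_inter, ← Finset.sdiff_eq_filter]
        simp [nsmul_eq_mul]; ring
      refine exposed_extreme (lfun w)
        (Set.mem_union_right _ ⟨I, hIne, hIid, rfl⟩) (c := (I.card : ℝ)) ?_ ?_ ?_
      · rw [lfun_indicator, hsumJ]; simp
      · rintro v (⟨g, rfl⟩ | ⟨J, hJne, _, rfl⟩)
        · rw [lfun_neg_single]; simp only [hw]
          split <;> linarith
        · rw [lfun_indicator, hsumJ]
          have h1 : ((J ∩ I).card : ℝ) ≤ I.card := by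
            exact_mod_cast Finset.card_le_card (Finset.inter_subset_right)
          have h2 : (0 : ℝ) ≤ ((J \ I).card : ℝ) := by positivity
          linarith
      · rintro v (⟨g, rfl⟩ | ⟨J, hJne, _, rfl⟩) hv
        · exfalso
          rw [lfun_neg_single] at hv; simp only [hw] at hv
          revert hv; split <;> intro hv <;> linarith
        · rw [lfun_indicator, hsumJ] at hv
          have h1 : ((J ∩ I).card : ℝ) ≤ I.card := by
            exact_mod_cast Finset.card_le_card (Finset.inter_subset_right)
          have h2 : (0 : ℝ) ≤ ((J \ I).card : ℝ) := by positivity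
          have hd0 : ((J \ I).card : ℝ) = 0 := by linarith
          have hd0' : (J \ I) = ∅ := by
            rw [← Finset.card_eq_zero]; exact_mod_cast hd0
          have hJI : J ⊆ I := by
            rw [← Finset.sdiff_eq_empty_iff_subset]; exact hd0'
          have hJIinter : J ∩ I = J := Finset.inter_eq_left.2 hJI
          rw [hJIinter, hd0] at hv
          have hJcard : J.card = I.card := by
            have h3 : (J.card : ℝ) = (I.card : ℝ) := by linarith
            exact_mod_cast h3
          have : J = I := Finset.eq_of_subset_of_card_le hJI (le_of_eq hJcard.symm)
          rw [this]
  · -- part 2: lattice points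
    intro x hx
    have hub : ∀ e : E, (x e : ℝ) ≤ 1 := by
      intro e
      have hb : ∀ v ∈ Vtau E r, lfun (fun f => if f = e then (1 : ℝ) else 0) v ≤ 1 := by
        rintro v (⟨g, rfl⟩ | ⟨J, _, _, rfl⟩)
        · rw [lfun_neg_single]; split <;> norm_num
        · rw [lfun_indicator, Finset.sum_ite_eq' J e (fun _ => (1 : ℝ))]
          split <;> norm_num
      have := hull_le _ hb _ hx
      rwa [lfun_cw] at this
    have hlb : ∀ e : E, (-1 : ℝ) ≤ (x e : ℝ) := by
      intro e
      have hb : ∀ v ∈ Vtau E r, (-(lfun (fun f => if f = e then (1 : ℝ) else 0))) v ≤ 1 := by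
        rintro v (⟨g, rfl⟩ | ⟨J, _, _, rfl⟩) <;>
          simp only [LinearMap.neg_apply]
        · rw [lfun_neg_single]; split <;> norm_num
        · rw [lfun_indicator, Finset.sum_ite_eq' J e (fun _ => (1 : ℝ))]
          split <;> norm_num
      have := hull_le _ hb _ hx
      rw [LinearMap.neg_apply, lfun_cw] at this
      linarith
    by_cases hneg : ∃ a, x a < 0
    · obtain ⟨a, ha⟩ := hneg
      right
      have hxa : (x a : ℝ) = -1 := by
        have h1 := hlb a
        have h2 : x a ≤ -1 := by omega
        have h2' : (x a : ℝ) ≤ -1 := by exact_mod_cast h2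
        linarith
      have hb : ∀ v ∈ Vtau E r, (-(lfun (fun f => if f = a then (1 : ℝ) else 0))) v ≤ 1 := by
        rintro v (⟨g, rfl⟩ | ⟨J, _, _, rfl⟩) <;>
          simp only [LinearMap.neg_apply]
        · rw [lfun_neg_single]; split <;> norm_num
        · rw [lfun_indicator, Finset.sum_ite_eq' J a (fun _ => (1 : ℝ))]
          split <;> norm_num
      have heq : ∀ v ∈ Vtau E r,
          (-(lfun (fun f => if f = a then (1 : ℝ) else 0))) v = 1 → v = -Pi.single a 1 := by
        rintro v (⟨g, rfl⟩ | ⟨J, _, _, rfl⟩) hv <;>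
          simp only [LinearMap.neg_apply] at hv
        · rw [lfun_neg_single] at hv
          by_cases hg : g = a
          · rw [hg]
          · simp [hg] at hv
        · exfalso
          rw [lfun_indicator, Finset.sum_ite_eq' J a (fun _ => (1 : ℝ))] at hv
          revert hv; split <;> intro hv <;> linarith
      have hfinal := hull_eq_point _ hb heq _ hx (by
        rw [LinearMap.neg_apply, lfun_cw, hxa]; norm_num)
      rw [hfinal]
      exact Set.mem_union_left _ ⟨a, rfl⟩
    · push_neg at hneg
      have hx01 : ∀ e, x e = 0 ∨ x e = 1 := by
        intro e
        have h1 : x e ≤ 1 := by exact_mod_cast hub e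
        have h2 := hneg e
        omega
      set P : Finset E := Finset.univ.filter (fun e => x e = 1) with hP
      have hmemP : ∀ e, e ∈ P ↔ x e = 1 := by
        intro e; simp [hP]
      by_cases hPne : P.Nonempty
      · by_cases hid : IsOrderIdeal r P
        · right
          refine Set.mem_union_right _ ⟨P, hPne, hid, ?_⟩
          funext e
          rcases hx01 e with h0 | h1
          · have : e ∉ P := by rw [hmemP]; omega
            simp [this, h0]
          · have : e ∈ P := by rw [hmemP]; exact h1
            simp [this, h1]
        · exfalso
          unfold IsOrderIdeal at hid
          push_neg at hid
          obtain ⟨a, b, hab, hbP, haP⟩ := hid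
          set n : ℝ := (Fintype.card E : ℝ) with hn
          have hn1 : 1 ≤ n := by
            rw [hn]; exact_mod_cast Fintype.card_pos
          have hn0 : 0 < n := by linarith
          set w : E → ℝ :=
            fun f => (if f = b then 1 else 0) - (if f = a then 1 else 0) + 1/n with hw
          have hb' : ∀ v ∈ Vtau E r, lfun w v ≤ 1 := by
            rintro v (⟨g, rfl⟩ | ⟨J, hJne, hJid, rfl⟩)
            · rw [lfun_neg_single]; simp only [hw]
              have : 0 < 1/n := by positivity
              split <;> split <;> linarith
            · rw [lfun_indicator]
              have hcomp : ∑ f ∈ J, w f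
                  = (if b ∈ J then (1 : ℝ) else 0) - (if a ∈ J then (1 : ℝ) else 0)
                    + (J.card : ℝ) * (1/n) := by
                simp only [hw, Finset.sum_add_distrib, Finset.sum_sub_distrib,
                  Finset.sum_ite_eq' J b (fun _ => (1 : ℝ)),
                  Finset.sum_ite_eq' J a (fun _ => (1 : ℝ)), Finset.sum_const, nsmul_eq_mul]
              rw [hcomp]
              have hcard : (J.card : ℝ) ≤ n := by
                rw [hn]; exact_mod_cast Finset.card_le_univ J
              have hfrac : (J.card : ℝ) * (1/n) ≤ 1 := by
                rw [mul_one_div, div_le_one hn0]; exact hcard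
              have hdiff : (if b ∈ J then (1 : ℝ) else 0) - (if a ∈ J then (1 : ℝ) else 0) ≤ 0 := by
                by_cases hbJ : b ∈ J
                · have haJ : a ∈ J := hJid a b hab hbJ
                  simp [hbJ, haJ]
                · by_cases haJ : a ∈ J <;> simp [hbJ, haJ]
              linarith
          have hle := hull_le _ hb' _ hx
          have hcompx : lfun w (fun e => (x e : ℝ))
              = (x b : ℝ) - (x a : ℝ) + (1/n) * ∑ f, (x f : ℝ) := by
            simp only [lfun_apply, hw, add_mul, sub_mul, ite_mul, one_mul, zero_mul,
              Finset.sum_add_distrib, Finset.sum_sub_distrib,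
              Finset.sum_ite_eq' Finset.univ b (fun f => (x f : ℝ)),
              Finset.sum_ite_eq' Finset.univ a (fun f => (x f : ℝ)),
              Finset.mem_univ, if_true, ← Finset.mul_sum]
            try ring
          have hxb : (x b : ℝ) = 1 := by
            have := (hmemP b).1 hbP; exact_mod_cast this
          have hxa : (x a : ℝ) = 0 := by
            have h1 : x a ≠ 1 := fun h => haP ((hmemP a).2 h)
            have : x a = 0 := by rcases hx01 a with h | h; exact h; exact absurd h h1
            exact_mod_cast this
          have hsumge : (1 : ℝ) ≤ ∑ f, (x f : ℝ) := by
            rw [← hxb]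
            exact Finset.single_le_sum (f := fun f => ((x f : ℝ)))
              (fun f _ => Int.cast_nonneg (hneg f)) (Finset.mem_univ b)
          have hfr : (1/n) * 1 ≤ (1/n) * ∑ f, (x f : ℝ) := by
            apply mul_le_mul_of_nonneg_left hsumge; positivity
          have : 0 < 1/n := by positivity
          rw [hcompx, hxb, hxa] at hle
          linarith
      · left
        funext e
        have h1 : x e ≠ 1 := fun h => hPne ⟨e, (hmemP e).2 h⟩
        have : x e = 0 := by rcases hx01 e with h | h; exact h; exact absurd h h1
        simpa using this
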